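/- Let G be a group, s : G → ℤ a homomorphism, and δ, γ ∈ G with s(δ) = n−1, s(γ) = n for an integer n ≥ 2, and δ^n = γ^{n−1}. Suppose α, β ∈ G are each conjugate to a power of δ or a power of γ, and s(α) = s(β). Then α and β are conjugate. -/
import Mathlib

private lemma s_eq_of_isConj' {G : Type*} [Group G] (s : G →* Multiplicative ℤ)
    {x y : G} (h : IsConj x y) : s x = s y := by
  obtain ⟨c, hc⟩ := h
  have h2 : s c * s x = s y * s c := by
    simpa using congrArg s hc.eq
  rw [mul_comm (s c) (s x)] at h2
  exact mul_right_cancel h2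

private lemma key_pow_eq {G : Type*} [Group G] {δ γ : G} {n : ℕ} (hn : 2 ≤ n)
    (hδγ : δ ^ n = γ ^ (n - 1)) {a b : ℤ}
    (h : ((n : ℤ) - 1) * a = (n : ℤ) * b) : δ ^ a = γ ^ b := by
  have hm1 : ((n : ℤ) - 1) ≠ 0 := by
    have : (2 : ℤ) ≤ (n : ℤ) := by exact_mod_cast hn
    omega
  have hcop : IsCoprime ((n : ℤ) - 1) (n : ℤ) := by
    refine ⟨-1, 1, by ring⟩
  have hdvd : ((n : ℤ) - 1) ∣ b := by
    have : ((n : ℤ) - 1) ∣ (n : ℤ) * b := ⟨a, by linarith [h]⟩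
    exact (IsCoprime.dvd_of_dvd_mul_left hcop this)
  obtain ⟨q, hq⟩ := hdvd
  have ha : a = (n : ℤ) * q := by
    have h2 : ((n : ℤ) - 1) * a = ((n : ℤ) - 1) * ((n : ℤ) * q) := by
      rw [h, hq]; ring
    exact mul_left_cancel₀ hm1 h2
  have hzδγ : δ ^ (n : ℤ) = γ ^ ((n : ℤ) - 1) := by
    have hcast : ((n - 1 : ℕ) : ℤ) = (n : ℤ) - 1 := by
      have : 1 ≤ n := by omega
      push_cast [this]; ring
    rw [← hcast, zpow_natCast, zpow_natCast, hδγ]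
  calc δ ^ a = (δ ^ (n : ℤ)) ^ q := by rw [← zpow_mul, ← ha]
    _ = (γ ^ ((n : ℤ) - 1)) ^ q := by rw [hzδγ]
    _ = γ ^ b := by rw [← zpow_mul, ← hq]

theorem periodic_conj_of_eq_exponent_sum {G : Type*} [Group G]
    (s : G →* Multiplicative ℤ) (δ γ : G) (n : ℕ) (hn : 2 ≤ n)
    (hsδ : s δ = Multiplicative.ofAdd ((n : ℤ) - 1))
    (hsγ : s γ = Multiplicative.ofAdd (n : ℤ))
    (hδγ : δ ^ n = γ ^ (n - 1))
    (α β : G)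
    (hα : ∃ a : ℤ, IsConj (δ ^ a) α ∨ IsConj (γ ^ a) α)
    (hβ : ∃ b : ℤ, IsConj (δ ^ b) β ∨ IsConj (γ ^ b) β)
    (hs : s α = s β) : IsConj α β := by
  obtain ⟨a, ha⟩ := hα
  obtain ⟨b, hb⟩ := hβ
  have hm1 : ((n : ℤ) - 1) ≠ 0 := by
    have : (2 : ℤ) ≤ (n : ℤ) := by exact_mod_cast hn
    omega
  have hn0 : (n : ℤ) ≠ 0 := by positivity
  have hsδa : ∀ c : ℤ, Multiplicative.toAdd (s (δ ^ c)) = ((n : ℤ) - 1) * c := by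
    intro c
    rw [map_zpow, hsδ]
    simp [mul_comm]
  have hsγa : ∀ c : ℤ, Multiplicative.toAdd (s (γ ^ c)) = (n : ℤ) * c := by
    intro c
    rw [map_zpow, hsγ]
    simp [mul_comm]
  rcases ha with ha | ha <;> rcases hb with hb | hb
  · -- δ, δ
    have heq : ((n : ℤ) - 1) * a = ((n : ℤ) - 1) * b := by
      rw [← hsδa a, ← hsδa b, s_eq_of_isConj' s ha, s_eq_of_isConj' s hb, hs]
    have : a = b := mul_left_cancel₀ hm1 heq
    exact (ha.symm.trans (this ▸ hb))
  · -- δ, γ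
    have heq : ((n : ℤ) - 1) * a = (n : ℤ) * b := by
      rw [← hsδa a, ← hsγa b, s_eq_of_isConj' s ha, s_eq_of_isConj' s hb, hs]
    have hpow := key_pow_eq hn hδγ heq
    exact (ha.symm.trans (hpow ▸ hb))
  · -- γ, δ
    have heq : ((n : ℤ) - 1) * b = (n : ℤ) * a := by
      rw [← hsδa b, ← hsγa a, s_eq_of_isConj' s ha, s_eq_of_isConj' s hb, hs]
    have hpow := key_pow_eq hn hδγ heq
    exact (ha.symm.trans (hpow ▸ hb))
  · -- γ, γ
    have heq : (n : ℤ) * a = (n : ℤ) * b := by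
      rw [← hsγa a, ← hsγa b, s_eq_of_isConj' s ha, s_eq_of_isConj' s hb, hs]
    have : a = b := mul_left_cancel₀ hn0 heq
    exact (ha.symm.trans (this ▸ hb))
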